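/- Let (a_j)_{j≥1} be a sequence of integers and set S_k = Σ_{j=1}^{k} 2^{j−1} a_j. Assume that S_k → ∞ as k → ∞ and that 0 < S_k / 2^k < 3/4 for every k ≥ 1. Then there is no sequence of integers (b_j)_{j≥0} satisfying a_j = −2 b_j + b_{j−1} for all j ≥ 1. (Moreover such sequences (a_j) exist, e.g. consisting only of zeroes and ones.) -/

import Mathlib

open Filter

private lemma telescope (a b : ℕ → ℤ) (hb : ∀ j : ℕ, 1 ≤ j → a j = -2 * b j + b (j - 1)) :
    ∀ k : ℕ, ∑ j ∈ Finset.Icc 1 k, 2 ^ (j - 1) * a j = b 0 - 2 ^ k * b k := by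
  intro k
  induction k with
  | zero => simp
  | succ k ih =>
    rw [Finset.sum_Icc_succ_top (Nat.succ_le_succ (Nat.zero_le k)), ih,
      hb (k + 1) (Nat.succ_le_succ (Nat.zero_le k))]
    simp only [Nat.add_sub_cancel]
    ring

private def aa : ℕ → ℤ := fun j => if j % 2 = 1 then 1 else 0

private lemma aa_closed :
    ∀ k : ℕ, 3 * ∑ j ∈ Finset.Icc 1 k, 2 ^ (j - 1) * aa j = 2 ^ (k + k % 2) - 1 := by
  intro k
  induction k with
  | zero => simp
  | succ k ih =>
    rw [Finset.sum_Icc_succ_top (Nat.succ_le_succ (Nat.zero_le k)), mul_add, ih]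
    rcases Nat.mod_two_eq_zero_or_one k with h | h
    · have h1 : (k + 1) % 2 = 1 := by omega
      have ha : aa (k + 1) = 1 := by simp [aa, h1]
      rw [ha, h1, h]
      simp only [Nat.add_sub_cancel]
      have hp : (2 : ℤ) ^ (k + 1 + 1) = 4 * 2 ^ (k + 0) := by ring
      rw [hp]; ring
    · have h1 : (k + 1) % 2 = 0 := by omega
      have ha : aa (k + 1) = 0 := by simp [aa, h1]
      rw [ha, h1, h]
      simp only [Nat.add_sub_cancel]
      ring

theorem stmt17 :
    (∀ a : ℕ → ℤ,
      Tendsto (fun k : ℕ => ∑ j ∈ Finset.Icc 1 k, 2 ^ (j - 1) * a j) atTop atTop →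
      (∀ k : ℕ, 1 ≤ k →
        0 < ((∑ j ∈ Finset.Icc 1 k, 2 ^ (j - 1) * a j : ℤ) : ℚ) / 2 ^ k ∧
        ((∑ j ∈ Finset.Icc 1 k, 2 ^ (j - 1) * a j : ℤ) : ℚ) / 2 ^ k < 3 / 4) →
      ¬ ∃ b : ℕ → ℤ, ∀ j : ℕ, 1 ≤ j → a j = -2 * b j + b (j - 1)) ∧
    ∃ a : ℕ → ℤ, (∀ j, a j = 0 ∨ a j = 1) ∧
      Tendsto (fun k : ℕ => ∑ j ∈ Finset.Icc 1 k, 2 ^ (j - 1) * a j) atTop atTop ∧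
      (∀ k : ℕ, 1 ≤ k →
        0 < ((∑ j ∈ Finset.Icc 1 k, 2 ^ (j - 1) * a j : ℤ) : ℚ) / 2 ^ k ∧
        ((∑ j ∈ Finset.Icc 1 k, 2 ^ (j - 1) * a j : ℤ) : ℚ) / 2 ^ k < 3 / 4) := by
  constructor
  · rintro a htend hbnd ⟨b, hb⟩
    have key := telescope a b hb
    have hev := tendsto_atTop.mp htend (b 0 + 1)
    rw [eventually_atTop] at hev
    obtain ⟨N, hN⟩ := hev
    set n := (b 0).natAbs with hn
    set k := max N (n + 2) with hkdef
    have hk1 : 1 ≤ k := le_trans (by omega) (le_max_right N (n + 2))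
    have hpos : (0 : ℤ) < 2 ^ k := by positivity
    -- 2^k ≥ 4 * n
    have hpow : (4 : ℤ) * n ≤ 2 ^ k := by
      have h1 : (n : ℤ) < 2 ^ n := by exact_mod_cast (Nat.lt_two_pow_self (n := n))
      have h2 : (2 : ℤ) ^ (n + 2) ≤ 2 ^ k := by
        apply pow_le_pow_right₀ (by norm_num) (le_max_right N (n + 2))
      have h3 : (2 : ℤ) ^ (n + 2) = 4 * 2 ^ n := by ring
      linarith
    have hSk : b 0 + 1 ≤ b 0 - 2 ^ k * b k := by
      have := hN k (le_max_left _ _)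
      rwa [key k] at this
    have hbk : b k ≤ -1 := by
      by_contra h
      push_neg at h
      have hbk0 : 0 ≤ b k := by omega
      nlinarith
    -- rational bound gives 4 S < 3 * 2^k
    have hq := (hbnd k hk1).2
    rw [div_lt_div_iff₀ (by positivity) (by norm_num)] at hq
    have hZ : (∑ j ∈ Finset.Icc 1 k, 2 ^ (j - 1) * a j : ℤ) * 4 < 3 * 2 ^ k := by
      exact_mod_cast hq
    rw [key k] at hZ
    have habs : -(n : ℤ) ≤ b 0 := by
      have := neg_abs_le (b 0)
      rwa [Int.abs_eq_natAbs] at this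
    have hmul : 2 ^ k * b k ≤ 2 ^ k * (-1) :=
      mul_le_mul_of_nonneg_left hbk (le_of_lt hpos)
    linarith
  · refine ⟨aa, fun j => ?_, ?_, ?_⟩
    · unfold aa; split <;> simp
    · rw [tendsto_atTop]
      intro c
      filter_upwards [eventually_ge_atTop (3 * c).toNat] with k hk
      have hcl := aa_closed k
      have h1 : (k : ℤ) < 2 ^ k := by exact_mod_cast (Nat.lt_two_pow_self (n := k))
      have h2 : (2 : ℤ) ^ k ≤ 2 ^ (k + k % 2) :=
        pow_le_pow_right₀ (by norm_num) (Nat.le_add_right _ _)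
      have h3 : 3 * c ≤ (3 * c).toNat := Int.self_le_toNat _
      have h4 : ((3 * c).toNat : ℤ) ≤ k := by exact_mod_cast hk
      linarith
    · intro k hk
      have hcl := aa_closed k
      have hpos : (0 : ℚ) < 2 ^ k := by positivity
      have h2 : (2 : ℤ) ^ k ≤ 2 ^ (k + k % 2) :=
        pow_le_pow_right₀ (by norm_num) (Nat.le_add_right _ _)
      have h2' : (2 : ℤ) ^ (k + k % 2) ≤ 2 ^ (k + 1) :=
        pow_le_pow_right₀ (by norm_num) (by omega)
      have hge : (2 : ℤ) ≤ 2 ^ k := by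
        calc (2 : ℤ) = 2 ^ 1 := by norm_num
        _ ≤ 2 ^ k := pow_le_pow_right₀ (by norm_num) hk
      have hp2 : (2 : ℤ) ^ (k + 1) = 2 * 2 ^ k := by ring
      have hp1 : (1 : ℤ) ≤ ∑ j ∈ Finset.Icc 1 k, 2 ^ (j - 1) * aa j := by
        have h3 : 1 ≤ 3 * ∑ j ∈ Finset.Icc 1 k, 2 ^ (j - 1) * aa j := by linarith
        set s := ∑ j ∈ Finset.Icc 1 k, 2 ^ (j - 1) * aa j
        omega
      constructor
      · apply div_pos _ hpos
        exact_mod_cast lt_of_lt_of_le zero_lt_one hp1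
      · rw [div_lt_div_iff₀ hpos (by norm_num)]
        have hZ : (∑ j ∈ Finset.Icc 1 k, 2 ^ (j - 1) * aa j : ℤ) * 4 < 3 * 2 ^ k := by
          linarith
        exact_mod_cast hZ
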